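/- Suppose there is a temporal walk in a temporal star K_{1,n−1} = (G_1,...,G_L) that starts at the center s, ends at s, and visits all n vertices within L time steps. Then in the extended temporal graph G' (which contains the star vertices, plus path vertices p_0,...,p_Q, where for time steps t > L the edges {v,s} for all star vertices v and {s,p_0} are present, and at all time steps all path edges {p_j,p_{j+1}} are present), there is a temporal walk starting at s visiting all n + Q + 1 vertices within L + Q + 1 time steps. -/
import Mathlib


/-- If a temporal star has an exploration starting and ending at the center `s`
within `L` time steps, then the extended temporal graph (star plus a path
`p_0, …, p_Q`, with all star edges and the edge `{s, p_0}` present after time `L`,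
and all path edges always present) can be fully explored from `s` within
`L + Q + 1` time steps. -/
theorem star_exploration_extends {V : Type*} [Fintype V] (L Q n : ℕ)
    (s : V) (hn : Fintype.card V = n)
    (G : ℕ → SimpleGraph V)
    (hstar : ∀ t, ∀ a b : V, (G t).Adj a b → a = s ∨ b = s)
    (G' : ℕ → SimpleGraph (V ⊕ Fin (Q + 1)))
    (hpath : ∀ (t : ℕ) (j : ℕ) (h : j < Q),
      (G' t).Adj (Sum.inr ⟨j, by omega⟩) (Sum.inr ⟨j + 1, by omega⟩))
    (hincl : ∀ t ≤ L, ∀ a b : V, (G t).Adj a b → (G' t).Adj (Sum.inl a) (Sum.inl b))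
    (hlate : ∀ t > L, (∀ v : V, v ≠ s → (G' t).Adj (Sum.inl v) (Sum.inl s)) ∧
      (G' t).Adj (Sum.inl s) (Sum.inr ⟨0, by omega⟩))
    -- the temporal walk in the star: starts at `s`, ends at `s`, visits everything
    (w : ℕ → V) (hw0 : w 0 = s)
    (hwstep : ∀ t < L, w (t + 1) = w t ∨ (G (t + 1)).Adj (w t) (w (t + 1)))
    (hwL : w L = s)
    (hwall : ∀ v : V, ∃ t ≤ L, w t = v) :
    ∃ w' : ℕ → (V ⊕ Fin (Q + 1)),
      w' 0 = Sum.inl s ∧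
      (∀ t < L + Q + 1, w' (t + 1) = w' t ∨ (G' (t + 1)).Adj (w' t) (w' (t + 1))) ∧
      (∀ x : V ⊕ Fin (Q + 1), ∃ t ≤ L + Q + 1, w' t = x) := by
  refine ⟨fun t => if h : t ≤ L then Sum.inl (w t)
      else Sum.inr ⟨min (t - L - 1) Q, by omega⟩, ?_, ?_, ?_⟩
  · simp [hw0]
  · intro t ht
    by_cases h1 : t + 1 ≤ L
    · have h0 : t ≤ L := by omega
      simp only [dif_pos h1, dif_pos h0]
      rcases hwstep t (by omega) with h | h
      · exact Or.inl (by rw [h])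
      · exact Or.inr (hincl (t + 1) h1 _ _ h)
    · by_cases h0 : t ≤ L
      · have hL : t = L := by omega
        subst hL
        simp only [dif_neg h1, dif_pos h0]
        right
        have e : t + 1 - t - 1 = 0 := by omega
        simp only [e, Nat.zero_min, hwL]
        exact (hlate (t + 1) (by omega)).2
      · simp only [dif_neg h1, dif_neg h0]
        by_cases hq : t - L - 1 < Q
        · right
          have e1 : min (t - L - 1) Q = t - L - 1 := by omega
          have e2 : min (t + 1 - L - 1) Q = (t - L - 1) + 1 := by omega
          simp only [e1, e2]
          exact hpath (t + 1) (t - L - 1) hq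
        · left
          have : min (t + 1 - L - 1) Q = min (t - L - 1) Q := by omega
          simp [this]
  · rintro (v | ⟨j, hj⟩)
    · obtain ⟨t, ht, hv⟩ := hwall v
      exact ⟨t, by omega, by simp [dif_pos ht, hv]⟩
    · refine ⟨L + 1 + j, by omega, ?_⟩
      have h : ¬ (L + 1 + j ≤ L) := by omega
      simp only [dif_neg h]
      congr 1
      ext
      simp
      omega
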